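/- Fix i < j and regard the generate function g_{j,i} as a Boolean function of the 2(j-i+1) variables a_i, b_i, …, a_j, b_j, defined recursively by g_{i,i} = a_i ∧ b_i and g_{l,i} = (a_l ∧ b_l) ∨ ((a_l ⊕ b_l) ∧ g_{l-1,i}) for i < l ≤ j. Under the interleaved variable order a_j, b_j, a_{j-1}, b_{j-1}, …, a_i, b_i, the number of distinct non-constant prefix restrictions of g_{j,i} is at most 3·(j - i) + 2. -/
import Mathlib


/-- The prefix restriction of a Boolean function `f : (Fin n → Bool) → Bool`
obtained by fixing the first `k` variables (w.r.t. the order `x_0, …, x_{n-1}`)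
to the constants given by `ρ`, regarded again as a function
`(Fin n → Bool) → Bool` that ignores the fixed coordinates. -/
def prefixRestrict {n : ℕ} (f : (Fin n → Bool) → Bool) (k : ℕ) (ρ : Fin n → Bool) :
    (Fin n → Bool) → Bool :=
  fun x => f fun j => if (j : ℕ) < k then ρ j else x j

/-- The number of distinct non-constant prefix restrictions of
`f : (Fin n → Bool) → Bool` under the variable order `x_0, …, x_{n-1}`.
This equals the number of internal nodes of the reduced ordered BDD of `f`
under this variable order, and is taken as the definition of the BDD size. -/
noncomputable def bddSize {n : ℕ} (f : (Fin n → Bool) → Bool) : ℕ :=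
  Set.ncard {g : (Fin n → Bool) → Bool |
    (∃ k ≤ n, ∃ ρ : Fin n → Bool, g = prefixRestrict f k ρ) ∧ ¬∃ c, ∀ x, g x = c}

/-- Auxiliary recursion for the generate function with `m = j - i`, on the
`2(j-i+1)` variables ordered `a_j, b_j, a_{j-1}, b_{j-1}, …, a_i, b_i`, i.e.
`x (2t) = a_{j-t}` and `x (2t+1) = b_{j-t}` for `0 ≤ t ≤ m`.
`generateAux m x r = g_{i+r,i}`, defined by `g_{i,i} = a_i ∧ b_i` and
`g_{l,i} = (a_l ∧ b_l) ∨ ((a_l ⊕ b_l) ∧ g_{l-1,i})` for `i < l ≤ j`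
(note that `a_{i+r}` is the variable `x (2(m-r))` and `b_{i+r}` is
`x (2(m-r)+1)`). -/
def generateAux (m : ℕ) (x : Fin (2 * (m + 1)) → Bool) : ℕ → Bool
  | 0 => x ⟨2 * m, by omega⟩ && x ⟨2 * m + 1, by omega⟩
  | r + 1 =>
      if h : r + 1 ≤ m then
        (x ⟨2 * (m - (r + 1)), by omega⟩ && x ⟨2 * (m - (r + 1)) + 1, by omega⟩) ||
          (xor (x ⟨2 * (m - (r + 1)), by omega⟩) (x ⟨2 * (m - (r + 1)) + 1, by omega⟩) &&
            generateAux m x r)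
      else false

/-- The generate function `g_{j,i}` with `m = j - i`, regarded as a Boolean
function of the `2(j-i+1)` variables `a_j, b_j, a_{j-1}, b_{j-1}, …, a_i, b_i`
in this interleaved order. -/
def generateFun (m : ℕ) (x : Fin (2 * (m + 1)) → Bool) : Bool :=
  generateAux m x m

-- tail function: generate over levels t..m
def TFun (m t : ℕ) (x : Fin (2 * (m + 1)) → Bool) : Bool := generateAux m x (m - t)

lemma generateAux_congr (m r : ℕ) {x y : Fin (2 * (m + 1)) → Bool}
    (h : ∀ j : Fin (2 * (m + 1)), 2 * (m - r) ≤ (j : ℕ) → x j = y j) :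
    generateAux m x r = generateAux m y r := by
  induction r with
  | zero =>
      simp only [generateAux]
      rw [h _ (by simp only [Fin.val_mk]; omega), h _ (by simp only [Fin.val_mk]; omega)]
  | succ r ih =>
      simp only [generateAux]
      split
      · rw [h _ (by simp only [Fin.val_mk]; omega), h _ (by simp only [Fin.val_mk]; omega),
          ih (fun j hj => h j (by omega))]
      · rfl

lemma TFun_congr (m t : ℕ) (ht : t ≤ m) {x y : Fin (2 * (m + 1)) → Bool}
    (h : ∀ j : Fin (2 * (m + 1)), 2 * t ≤ (j : ℕ) → x j = y j) :
    TFun m t x = TFun m t y :=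
  generateAux_congr m (m - t) (fun j hj => h j (by omega))

lemma generateFun_eq_TFun (m : ℕ) : generateFun m = TFun m 0 := by
  funext x; simp [generateFun, TFun]

lemma TFun_top (m : ℕ) (x : Fin (2 * (m + 1)) → Bool) :
    TFun m m x = (x ⟨2 * m, by omega⟩ && x ⟨2 * m + 1, by omega⟩) := by
  unfold TFun
  rw [Nat.sub_self]
  rfl

lemma TFun_step (m t : ℕ) (ht : t < m) (x : Fin (2 * (m + 1)) → Bool) :
    TFun m t x = ((x ⟨2 * t, by omega⟩ && x ⟨2 * t + 1, by omega⟩) ||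
      (xor (x ⟨2 * t, by omega⟩) (x ⟨2 * t + 1, by omega⟩) && TFun m (t + 1) x)) := by
  unfold TFun
  have e : m - t = (m - (t + 1)) + 1 := by omega
  rw [e]
  simp only [generateAux]
  rw [dif_pos (by omega)]
  have e2 : m - (m - (t + 1) + 1) = t := by omega
  simp only [e2]

lemma prefixRestrict_succ {n : ℕ} (f : (Fin n → Bool) → Bool) (k : ℕ)
    (ρ x : Fin n → Bool) :
    prefixRestrict f (k + 1) ρ x =
      prefixRestrict f k ρ (fun j => if (j : ℕ) = k then ρ j else x j) := by
  unfold prefixRestrict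
  congr 1
  funext j
  by_cases h1 : (j : ℕ) < k
  · simp [h1, Nat.lt_succ_of_lt h1]
  · by_cases h2 : (j : ℕ) = k
    · simp [h1, h2]
    · have : ¬ (j : ℕ) < k + 1 := by omega
      simp [h1, h2, this]

lemma const_propagate {n : ℕ} (f : (Fin n → Bool) → Bool) (k : ℕ) (ρ : Fin n → Bool)
    {c : Bool} (h : ∀ x, prefixRestrict f k ρ x = c) :
    ∀ x, prefixRestrict f (k + 1) ρ x = c := by
  intro x
  rw [prefixRestrict_succ]
  exact h _

lemma even_char (m : ℕ) (ρ : Fin (2 * (m + 1)) → Bool) :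
    ∀ t, t ≤ m →
      (∃ c, ∀ x, prefixRestrict (generateFun m) (2 * t) ρ x = c) ∨
      (∀ x, prefixRestrict (generateFun m) (2 * t) ρ x = TFun m t x) := by
  intro t
  induction t with
  | zero =>
      intro _
      right
      intro x
      rw [generateFun_eq_TFun]
      show TFun m 0 _ = TFun m 0 x
      apply TFun_congr m 0 (Nat.zero_le m)
      intro j hj
      simp
  | succ t ih =>
      intro ht
      rcases ih (by omega) with ⟨c, hc⟩ | hT
      · left
        refine ⟨c, fun x => ?_⟩
        have e : 2 * (t + 1) = (2 * t + 1) + 1 := by ring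
        rw [e]
        exact const_propagate _ _ _ (const_propagate _ _ _ hc) x
      · -- key computation
        have htm : t < m := by omega
        have key : ∀ x, prefixRestrict (generateFun m) (2 * (t + 1)) ρ x =
            ((ρ ⟨2 * t, by omega⟩ && ρ ⟨2 * t + 1, by omega⟩) ||
              (xor (ρ ⟨2 * t, by omega⟩) (ρ ⟨2 * t + 1, by omega⟩) && TFun m (t + 1) x)) := by
          intro x
          have e : 2 * (t + 1) = (2 * t + 1) + 1 := by ring
          rw [e, prefixRestrict_succ, prefixRestrict_succ, hT]
          rw [TFun_step m t htm]
          have hx : TFun m (t + 1)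
              (fun j : Fin (2 * (m + 1)) =>
                if (j : ℕ) = 2 * t then ρ j else if (j : ℕ) = 2 * t + 1 then ρ j else x j) =
              TFun m (t + 1) x := by
            apply TFun_congr m (t + 1) (by omega)
            intro j hj
            rw [if_neg (by omega), if_neg (by omega)]
          rw [hx]
          have n1 : ¬ (2 * t = 2 * t + 1) := by omega
          have n2 : ¬ (2 * t + 1 = 2 * t) := by omega
          simp [n1, n2]
        cases hb1 : ρ ⟨2 * t, by omega⟩ <;> cases hb2 : ρ ⟨2 * t + 1, by omega⟩ <;>
          simp only [hb1, hb2] at key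
        · left; exact ⟨false, by simpa using key⟩
        · right; intro x; simpa using key x
        · right; intro x; simpa using key x
        · left; exact ⟨true, by simpa using key⟩

lemma full_char (m k : ℕ) (hk : k ≤ 2 * (m + 1)) (ρ : Fin (2 * (m + 1)) → Bool) :
    (∃ c, ∀ x, prefixRestrict (generateFun m) k ρ x = c) ∨
    (∃ t ≤ m, ∀ x, prefixRestrict (generateFun m) k ρ x = TFun m t x) ∨
    (∃ t, ∃ h : t < m, ∀ x, prefixRestrict (generateFun m) k ρ x =
        (x ⟨2 * t + 1, by omega⟩ && TFun m (t + 1) x)) ∨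
    (∃ t, ∃ h : t < m, ∀ x, prefixRestrict (generateFun m) k ρ x =
        (x ⟨2 * t + 1, by omega⟩ || TFun m (t + 1) x)) ∨
    (∀ x, prefixRestrict (generateFun m) k ρ x = x ⟨2 * m + 1, by omega⟩) := by
  rcases Nat.even_or_odd k with ⟨t, het⟩ | ⟨t, hot⟩
  · -- k = 2 * t
    have het' : k = 2 * t := by omega
    by_cases htm : t ≤ m
    · rcases even_char m ρ t htm with ⟨c, hc⟩ | h
      · left
        exact ⟨c, fun x => by rw [het']; exact hc x⟩
      · right; left
        exact ⟨t, htm, fun x => by rw [het']; exact h x⟩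
    · -- t = m + 1, all variables fixed: constant
      have hkn : k = 2 * (m + 1) := by omega
      left
      refine ⟨generateFun m ρ, fun x => ?_⟩
      unfold prefixRestrict
      congr 1
      funext j
      rw [if_pos (by rw [hkn]; exact j.isLt)]
  · -- k = 2 * t + 1
    have htm : t ≤ m := by omega
    rcases even_char m ρ t htm with ⟨c, hc⟩ | hT
    · left
      refine ⟨c, fun x => ?_⟩
      rw [hot]
      exact const_propagate _ _ _ hc x
    · -- pr (2t+1) x = TFun m t (update x at 2t)
      have key : ∀ x, prefixRestrict (generateFun m) k ρ x =
          TFun m t (fun j => if (j : ℕ) = 2 * t then ρ j else x j) := by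
        intro x
        rw [hot, prefixRestrict_succ, hT]
      by_cases htlt : t < m
      · have key2 : ∀ x, prefixRestrict (generateFun m) k ρ x =
            ((ρ ⟨2 * t, by omega⟩ && x ⟨2 * t + 1, by omega⟩) ||
              (xor (ρ ⟨2 * t, by omega⟩) (x ⟨2 * t + 1, by omega⟩) && TFun m (t + 1) x)) := by
          intro x
          rw [key, TFun_step m t htlt]
          have hx : TFun m (t + 1)
              (fun j : Fin (2 * (m + 1)) => if (j : ℕ) = 2 * t then ρ j else x j) =
              TFun m (t + 1) x := by
            apply TFun_congr m (t + 1) (by omega)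
            intro j hj
            rw [if_neg (by omega)]
          rw [hx]
          have n2 : ¬ (2 * t + 1 = 2 * t) := by omega
          simp [n2]
        cases hb : ρ ⟨2 * t, by omega⟩ <;> simp only [hb] at key2
        · right; right; left
          refine ⟨t, htlt, fun x => ?_⟩
          rw [key2]
          cases x ⟨2 * t + 1, by omega⟩ <;> cases TFun m (t + 1) x <;> rfl
        · right; right; right; left
          refine ⟨t, htlt, fun x => ?_⟩
          rw [key2]
          cases x ⟨2 * t + 1, by omega⟩ <;> cases TFun m (t + 1) x <;> rfl
      · -- t = m
        have htm' : t = m := by omega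
        subst htm'
        have key2 : ∀ x, prefixRestrict (generateFun t) k ρ x =
            (ρ ⟨2 * t, by omega⟩ && x ⟨2 * t + 1, by omega⟩) := by
          intro x
          rw [key, TFun_top]
          have n2 : ¬ (2 * t + 1 = 2 * t) := by omega
          simp [n2]
        cases hb : ρ ⟨2 * t, by omega⟩ <;> simp only [hb] at key2
        · left
          refine ⟨false, fun x => ?_⟩
          rw [key2]
          simp
        · right; right; right; right
          intro x
          rw [key2]
          simp

def andForm (m t : ℕ) : (Fin (2 * (m + 1)) → Bool) → Bool :=
  if h : t < m then (fun x => x ⟨2 * t + 1, by omega⟩ && TFun m (t + 1) x)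
  else fun _ => false

def orForm (m t : ℕ) : (Fin (2 * (m + 1)) → Bool) → Bool :=
  if h : t < m then (fun x => x ⟨2 * t + 1, by omega⟩ || TFun m (t + 1) x)
  else fun _ => false

def lastForm (m : ℕ) : (Fin (2 * (m + 1)) → Bool) → Bool :=
  fun x => x ⟨2 * m + 1, by omega⟩

theorem bddSize_generateFun_le (m : ℕ) : bddSize (generateFun m) ≤ 3 * m + 2 := by
  classical
  let F : Finset ((Fin (2 * (m + 1)) → Bool) → Bool) :=
    ((Finset.range (m + 1)).image (TFun m) ∪
      (Finset.range m).image (andForm m) ∪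
      (Finset.range m).image (orForm m)) ∪ {lastForm m}
  have hsub : {g : (Fin (2 * (m + 1)) → Bool) → Bool |
      (∃ k ≤ 2 * (m + 1), ∃ ρ, g = prefixRestrict (generateFun m) k ρ) ∧
        ¬∃ c, ∀ x, g x = c} ⊆ ↑F := by
    rintro g ⟨⟨k, hk, ρ, hg⟩, hnc⟩
    rcases full_char m k hk ρ with ⟨c, hc⟩ | ⟨t, ht, hfun⟩ | ⟨t, ht, hfun⟩ |
        ⟨t, ht, hfun⟩ | hfun
    · exact absurd ⟨c, fun x => by rw [hg]; exact hc x⟩ hnc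
    · have hgt : g = TFun m t := by
        funext x; rw [hg]; exact hfun x
      simp only [F, Finset.mem_coe, Finset.mem_union, Finset.mem_image,
        Finset.mem_range, Finset.mem_singleton]
      exact Or.inl (Or.inl (Or.inl ⟨t, by omega, hgt.symm⟩))
    · have hgt : g = andForm m t := by
        funext x; rw [hg, andForm, dif_pos ht]; exact hfun x
      simp only [F, Finset.mem_coe, Finset.mem_union, Finset.mem_image,
        Finset.mem_range, Finset.mem_singleton]
      exact Or.inl (Or.inl (Or.inr ⟨t, ht, hgt.symm⟩))
    · have hgt : g = orForm m t := by
        funext x; rw [hg, orForm, dif_pos ht]; exact hfun x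
      simp only [F, Finset.mem_coe, Finset.mem_union, Finset.mem_image,
        Finset.mem_range, Finset.mem_singleton]
      exact Or.inl (Or.inr ⟨t, ht, hgt.symm⟩)
    · have hgt : g = lastForm m := by
        funext x; rw [hg]; exact hfun x
      simp only [F, Finset.mem_coe, Finset.mem_union, Finset.mem_singleton]
      exact Or.inr hgt
  have h1 : bddSize (generateFun m) ≤ F.card := by
    have := Set.ncard_le_ncard hsub F.finite_toSet
    rwa [Set.ncard_coe_finset] at this
  refine h1.trans ?_
  have c1 : ((Finset.range (m + 1)).image (TFun m)).card ≤ m + 1 :=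
    Finset.card_image_le.trans (by simp)
  have c2 : ((Finset.range m).image (andForm m)).card ≤ m :=
    Finset.card_image_le.trans (by simp)
  have c3 : ((Finset.range m).image (orForm m)).card ≤ m :=
    Finset.card_image_le.trans (by simp)
  calc F.card ≤ ((Finset.range (m + 1)).image (TFun m) ∪
        (Finset.range m).image (andForm m) ∪
        (Finset.range m).image (orForm m)).card + 1 := by
        refine (Finset.card_union_le _ _).trans ?_
        simp
    _ ≤ (((Finset.range (m + 1)).image (TFun m)).card +
          ((Finset.range m).image (andForm m)).card +
          ((Finset.range m).image (orForm m)).card) + 1 := by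
        have := Finset.card_union_le
          ((Finset.range (m + 1)).image (TFun m) ∪ (Finset.range m).image (andForm m))
          ((Finset.range m).image (orForm m))
        have h2 := Finset.card_union_le
          ((Finset.range (m + 1)).image (TFun m)) ((Finset.range m).image (andForm m))
        omega
    _ ≤ ((m + 1) + m + m) + 1 := by omega
    _ = 3 * m + 2 := by ring

/-- **BDD size of the generate function.** For all `i < j`, under the
interleaved variable order `a_j, b_j, a_{j-1}, b_{j-1}, …, a_i, b_i`, the
number of distinct non-constant prefix restrictions of `g_{j,i}` (i.e. its
BDD size) is at most `3·(j - i) + 2`. -/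
theorem generateFun_bddSize_le (i j : ℕ) (hij : i < j) :
    bddSize (generateFun (j - i)) ≤ 3 * (j - i) + 2 :=
  bddSize_generateFun_le (j - i)
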